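/- Let α > 0 and β > 0, and let f(x) = x^{α−1}(1−x)^{β−1}/B(α,β) for 0 < x < 1 and f(x) = 0 otherwise, the density of the Beta(α, β) distribution, where B(α,β) = Γ(α)Γ(β)/Γ(α+β). Then −∫_ℝ f(x) log₂(|x| · f(x)) dx = log₂ B(α,β) + [(α+β−1)·ψ(α+β) − α·ψ(α) − (β−1)·ψ(β)] / ln 2, where ψ is the digamma function. -/

import Mathlib

open Real MeasureTheory Set

/-- The digamma function `ψ(x) = d/dx log Γ(x)`. -/
noncomputable def digamma (x : ℝ) : ℝ := deriv (fun t => Real.log (Real.Gamma t)) x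

namespace FpBeta

/-- real beta integrand -/
noncomputable def φ (a b x : ℝ) : ℝ := x ^ (a - 1) * (1 - x) ^ (b - 1)

lemma hasDerivAt_Gamma {x : ℝ} (hx : 0 < x) :
    HasDerivAt Real.Gamma (Real.Gamma x * digamma x) x := by
  have hne : ∀ m : ℕ, x ≠ -m := fun m h => by
    have : (0:ℝ) ≤ m := Nat.cast_nonneg m
    nlinarith [hx]
  have hd : DifferentiableAt ℝ Real.Gamma x := Real.differentiableAt_Gamma hne
  have h := hd.hasDerivAt
  have hΓ : Real.Gamma x ≠ 0 := (Real.Gamma_pos_of_pos hx).ne'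
  have hlog : HasDerivAt (fun t => Real.log (Real.Gamma t))
      (deriv Real.Gamma x / Real.Gamma x) x := h.log hΓ
  have : digamma x = deriv Real.Gamma x / Real.Gamma x := hlog.deriv
  rw [this]
  have h2 : Real.Gamma x * (deriv Real.Gamma x / Real.Gamma x) = deriv Real.Gamma x := by
    field_simp
  rw [h2]; exact h

lemma cpow_eq (a : ℝ) {x : ℝ} (hx : 0 ≤ x) :
    (x : ℂ) ^ ((a : ℂ) - 1) = ((x ^ (a - 1) : ℝ) : ℂ) := by
  rw [Complex.ofReal_cpow hx]
  norm_num

lemma key_eqon {a b : ℝ} :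
    Set.EqOn (fun x : ℝ => (x : ℂ) ^ ((a:ℂ) - 1) * (1 - (x : ℂ)) ^ ((b:ℂ) - 1))
      (fun x : ℝ => ((φ a b x : ℝ) : ℂ)) (Icc 0 1) := by
  intro x hx
  simp only [φ]
  rw [Complex.ofReal_mul, Complex.ofReal_cpow hx.1, Complex.ofReal_cpow (by linarith [hx.2] : (0:ℝ) ≤ 1 - x)]
  push_cast
  ring

lemma betaInt_intervalIntegrable {a b : ℝ} (ha : 0 < a) (hb : 0 < b) :
    IntervalIntegrable (φ a b) volume 0 1 := by
  have hc := Complex.betaIntegral_convergent (u := (a:ℂ)) (v := (b:ℂ))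
    (by simpa using ha) (by simpa using hb)
  rw [intervalIntegrable_iff_integrableOn_Ioc_of_le zero_le_one] at hc ⊢
  refine IntegrableOn.congr_fun hc.re (fun x hx => ?_) measurableSet_Ioc
  have h := key_eqon (a := a) (b := b) ⟨hx.1.le, hx.2⟩
  simp only at h
  simp only [h, Complex.ofReal_re, RCLike.re_to_complex]

lemma betaInt_eq {a b : ℝ} (ha : 0 < a) (hb : 0 < b) :
    ∫ x in (0:ℝ)..1, φ a b x = Real.Gamma a * Real.Gamma b / Real.Gamma (a + b) := by
  have hΓ : Real.Gamma (a + b) ≠ 0 := (Real.Gamma_pos_of_pos (by linarith)).ne'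
  have hc := Complex.Gamma_mul_Gamma_eq_betaIntegral (s := (a:ℂ)) (t := (b:ℂ))
    (by simpa using ha) (by simpa using hb)
  have h2 : Complex.betaIntegral a b = ((∫ x in (0:ℝ)..1, φ a b x : ℝ) : ℂ) := by
    rw [Complex.betaIntegral, ← intervalIntegral.integral_ofReal]
    apply intervalIntegral.integral_congr
    rw [uIcc_of_le zero_le_one]
    exact key_eqon
  rw [h2] at hc
  have : ((a:ℂ) + b) = ((a + b : ℝ) : ℂ) := by push_cast; ring
  rw [this] at hc
  rw [Complex.Gamma_ofReal, Complex.Gamma_ofReal, Complex.Gamma_ofReal] at hc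
  rw [← Complex.ofReal_mul, ← Complex.ofReal_mul] at hc
  have h3 := Complex.ofReal_inj.mp hc
  field_simp
  linarith [h3]

lemma betaInt_integrableOn {a b : ℝ} (ha : 0 < a) (hb : 0 < b) :
    IntegrableOn (φ a b) (Ioo 0 1) := by
  have := (betaInt_intervalIntegrable ha hb).1
  exact this.congr_set_ae Ioo_ae_eq_Ioc

lemma betaInt_setIntegral {a b : ℝ} (ha : 0 < a) (hb : 0 < b) :
    ∫ x in Ioo (0:ℝ) 1, φ a b x = Real.Gamma a * Real.Gamma b / Real.Gamma (a + b) := by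
  rw [← integral_Ioc_eq_integral_Ioo, ← intervalIntegral.integral_of_le zero_le_one]
  exact betaInt_eq ha hb

lemma abs_log_le {x δ : ℝ} (hx : 0 < x) (hx1 : x < 1) (hδ : 0 < δ) :
    |Real.log x| ≤ x ^ (-δ) / δ := by
  have h1 : |Real.log x| = Real.log x⁻¹ := by
    rw [Real.log_inv, abs_of_nonpos (Real.log_nonpos hx.le hx1.le)]
  rw [h1]
  calc Real.log x⁻¹ ≤ (x⁻¹) ^ δ / δ := Real.log_le_rpow_div (inv_nonneg.2 hx.le) hδ
    _ = x ^ (-δ) / δ := by rw [Real.inv_rpow hx.le, ← Real.rpow_neg hx.le]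

lemma phi_nonneg {a b x : ℝ} (hx0 : 0 < x) (hx1 : x < 1) : 0 ≤ φ a b x :=
  mul_nonneg (Real.rpow_nonneg hx0.le _) (Real.rpow_nonneg (by linarith) _)

lemma phi_continuousOn (a b : ℝ) : ContinuousOn (φ a b) (Ioo 0 1) := by
  apply ContinuousOn.mul
  · exact continuousOn_id.rpow_const (fun x hx => Or.inl hx.1.ne')
  · exact (continuousOn_const.sub continuousOn_id).rpow_const
      (fun x hx => Or.inl (sub_pos.2 hx.2).ne')

lemma betaLog_integrableOn {a b : ℝ} (ha : 0 < a) (hb : 0 < b) :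
    IntegrableOn (fun x => φ a b x * Real.log x) (Ioo 0 1) := by
  have hδ : 0 < a/2 := half_pos ha
  have hg : IntegrableOn (fun x => 1/(a/2) * φ (a/2) b x) (Ioo 0 1) :=
    (betaInt_integrableOn hδ hb).const_mul _
  refine hg.mono' ?_ ?_
  · exact ((phi_continuousOn a b).mul
      (continuousOn_id.log (fun x hx => hx.1.ne'))).aestronglyMeasurable measurableSet_Ioo
  · rw [ae_restrict_iff' measurableSet_Ioo]
    refine Filter.Eventually.of_forall (fun x hx => ?_)
    obtain ⟨hx0, hx1⟩ := hx
    have h1 : 0 ≤ φ a b x := phi_nonneg hx0 hx1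
    rw [norm_mul, Real.norm_eq_abs, Real.norm_eq_abs, abs_of_nonneg h1]
    calc φ a b x * |Real.log x| ≤ φ a b x * (x ^ (-(a/2)) / (a/2)) :=
          mul_le_mul_of_nonneg_left (abs_log_le hx0 hx1 hδ) h1
      _ = 1/(a/2) * φ (a/2) b x := by
          simp only [φ]
          rw [show a/2 - 1 = (a-1) + (-(a/2)) by ring, Real.rpow_add hx0]
          ring

lemma betaLog1_integrableOn {a b : ℝ} (ha : 0 < a) (hb : 0 < b) :
    IntegrableOn (fun x => φ a b x * Real.log (1 - x)) (Ioo 0 1) := by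
  have hδ : 0 < b/2 := half_pos hb
  have hg : IntegrableOn (fun x => 1/(b/2) * φ a (b/2) x) (Ioo 0 1) :=
    (betaInt_integrableOn ha hδ).const_mul _
  refine hg.mono' ?_ ?_
  · exact ((phi_continuousOn a b).mul
      ((continuousOn_const.sub continuousOn_id).log
        (fun x hx => (sub_pos.2 hx.2).ne'))).aestronglyMeasurable measurableSet_Ioo
  · rw [ae_restrict_iff' measurableSet_Ioo]
    refine Filter.Eventually.of_forall (fun x hx => ?_)
    obtain ⟨hx0, hx1⟩ := hx
    have h1 : 0 ≤ φ a b x := phi_nonneg hx0 hx1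
    rw [norm_mul, Real.norm_eq_abs, Real.norm_eq_abs, abs_of_nonneg h1]
    calc φ a b x * |Real.log (1-x)| ≤ φ a b x * ((1-x) ^ (-(b/2)) / (b/2)) :=
          mul_le_mul_of_nonneg_left (abs_log_le (by linarith) (by linarith) hδ) h1
      _ = 1/(b/2) * φ a (b/2) x := by
          simp only [φ]
          rw [show b/2 - 1 = (b-1) + (-(b/2)) by ring, Real.rpow_add (by linarith : (0:ℝ) < 1 - x)]
          ring

lemma betaLog_eq {a b : ℝ} (ha : 0 < a) (hb : 0 < b) :
    ∫ x in Ioo (0:ℝ) 1, φ a b x * Real.log x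
      = (Real.Gamma a * Real.Gamma b / Real.Gamma (a + b)) * (digamma a - digamma (a + b)) := by
  have hab : 0 < a + b := by linarith
  have hΓab : Real.Gamma (a + b) ≠ 0 := (Real.Gamma_pos_of_pos hab).ne'
  set μ := volume.restrict (Ioo (0:ℝ) 1) with hμ
  have key := hasDerivAt_integral_of_dominated_loc_of_deriv_le
    (μ := μ) (F := fun t x => φ t b x) (F' := fun t x => φ t b x * Real.log x)
    (x₀ := a) (s := Metric.ball a (a/2)) (bound := fun x => |φ (a/2) b x * Real.log x|)
    (Metric.ball_mem_nhds a (half_pos ha))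
    (Filter.Eventually.of_forall (fun t =>
      (phi_continuousOn t b).aestronglyMeasurable measurableSet_Ioo))
    (betaInt_integrableOn ha hb)
    (((phi_continuousOn a b).mul
      (continuousOn_id.log (fun x hx => hx.1.ne'))).aestronglyMeasurable measurableSet_Ioo)
    ?_ ((betaLog_integrableOn (half_pos ha) hb).abs) ?_
  · -- use the derivative
    have hderiv := key.2
    have hev : (fun t => ∫ x, φ t b x ∂μ)
        =ᶠ[nhds a] (fun t => Real.Gamma t * Real.Gamma b / Real.Gamma (t + b)) := by
      filter_upwards [isOpen_Ioi.mem_nhds (show a ∈ Ioi (0:ℝ) from ha)] with t ht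
      exact betaInt_setIntegral ht hb
    have hG : HasDerivAt (fun t => Real.Gamma t * Real.Gamma b / Real.Gamma (t + b))
        (∫ x, φ a b x * Real.log x ∂μ) a := hderiv.congr_of_eventuallyEq hev.symm
    have h1 := (hasDerivAt_Gamma ha).mul_const (Real.Gamma b)
    have h2 : HasDerivAt (fun t => Real.Gamma (t + b))
        (Real.Gamma (a + b) * digamma (a + b)) a := by
      have := (hasDerivAt_Gamma hab).comp a ((hasDerivAt_id a).add_const b)
      rw [← mul_one (Real.Gamma (a + b) * digamma (a + b))]; exact this
    have h3 := h1.div h2 hΓab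
    have := hG.unique h3
    rw [this]
    field_simp
  · -- bound
    rw [ae_restrict_iff' measurableSet_Ioo]
    refine Filter.Eventually.of_forall (fun x hx t ht => ?_)
    obtain ⟨hx0, hx1⟩ := hx
    have ht2 : a/2 ≤ t - 1 + 1 := by
      rw [Metric.mem_ball, Real.dist_eq, abs_lt] at ht
      linarith [ht.1]
    have hmono : φ t b x ≤ φ (a/2) b x := by
      apply mul_le_mul_of_nonneg_right _ (Real.rpow_nonneg (by linarith) _)
      exact Real.rpow_le_rpow_of_exponent_ge hx0 hx1.le (by linarith)
    have h1 : 0 ≤ φ t b x := phi_nonneg hx0 hx1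
    rw [norm_mul, Real.norm_eq_abs, Real.norm_eq_abs, abs_of_nonneg h1]
    show φ t b x * |Real.log x| ≤ |φ (a/2) b x * Real.log x|
    rw [abs_mul]
    exact mul_le_mul_of_nonneg_right (hmono.trans (le_abs_self _)) (abs_nonneg _)
  · -- differentiability
    rw [ae_restrict_iff' measurableSet_Ioo]
    refine Filter.Eventually.of_forall (fun x hx t _ => ?_)
    obtain ⟨hx0, hx1⟩ := hx
    have h := (Real.hasStrictDerivAt_const_rpow hx0 (t - 1)).hasDerivAt
    have h2 : HasDerivAt (fun s => x ^ (s - 1)) (x ^ (t - 1) * Real.log x) t := by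
      have := h.comp t ((hasDerivAt_id t).sub_const 1)
      rw [← mul_one (x ^ (t - 1) * Real.log x)]; exact this
    have h3 := h2.mul_const ((1 - x) ^ (b - 1))
    simpa only [φ, mul_right_comm] using h3

lemma betaLog1_eq {a b : ℝ} (ha : 0 < a) (hb : 0 < b) :
    ∫ x in Ioo (0:ℝ) 1, φ a b x * Real.log (1 - x)
      = (Real.Gamma a * Real.Gamma b / Real.Gamma (a + b)) * (digamma b - digamma (a + b)) := by
  have h := betaLog_eq hb ha
  have hsub : ∫ x in (0:ℝ)..1, φ a b x * Real.log (1 - x)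
      = ∫ x in (0:ℝ)..1, φ b a x * Real.log x := by
    have := intervalIntegral.integral_comp_sub_left
      (a := (0:ℝ)) (b := 1) (fun x => φ b a x * Real.log x) 1
    norm_num at this
    rw [← this]
    apply intervalIntegral.integral_congr
    intro x _
    simp only [φ]
    ring_nf
  have hIoo : ∀ (g : ℝ → ℝ), ∫ x in Ioo (0:ℝ) 1, g x = ∫ x in (0:ℝ)..1, g x := by
    intro g
    rw [← integral_Ioc_eq_integral_Ioo, ← intervalIntegral.integral_of_le zero_le_one]
  rw [hIoo, hsub, ← hIoo, h]
  rw [add_comm b a, mul_comm (Real.Gamma b) (Real.Gamma a)]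

end FpBeta

/-- Differential floating-point entropy of the Beta distribution. -/
theorem fp_entropy_beta
    (α β : ℝ) (hα : 0 < α) (hβ : 0 < β)
    (B : ℝ) (hB : B = Real.Gamma α * Real.Gamma β / Real.Gamma (α + β))
    (f : ℝ → ℝ)
    (hf : ∀ x, f x = if 0 < x ∧ x < 1 then
      x ^ (α - 1) * (1 - x) ^ (β - 1) / B else 0) :
    -∫ x, f x * Real.logb 2 (|x| * f x)
      = Real.logb 2 B
        + ((α + β - 1) * digamma (α + β) - α * digamma α
            - (β - 1) * digamma β) / Real.log 2 := by
  open FpBeta in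
  have hΓs : 0 < Real.Gamma (α + β) := Real.Gamma_pos_of_pos (by linarith)
  have hBpos : 0 < B := by
    rw [hB]
    exact div_pos (mul_pos (Real.Gamma_pos_of_pos hα) (Real.Gamma_pos_of_pos hβ)) hΓs
  have hlog2 : Real.log 2 ≠ 0 := ne_of_gt (Real.log_pos one_lt_two)
  -- restrict the integral to Ioo 0 1
  have hzero : ∀ x ∉ Ioo (0:ℝ) 1, f x * Real.logb 2 (|x| * f x) = 0 := by
    intro x hx
    rw [hf x, if_neg (by simpa [Set.mem_Ioo] using hx)]
    simp
  rw [← setIntegral_eq_integral_of_forall_compl_eq_zero hzero]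
  -- rewrite the integrand on Ioo 0 1
  have hcongr : ∫ x in Ioo (0:ℝ) 1, f x * Real.logb 2 (|x| * f x)
      = ∫ x in Ioo (0:ℝ) 1,
          ((α / (B * Real.log 2)) * (φ α β x * Real.log x)
            + ((β - 1) / (B * Real.log 2)) * (φ α β x * Real.log (1 - x))
            + (-(Real.log B) / (B * Real.log 2)) * φ α β x) := by
    refine setIntegral_congr_fun measurableSet_Ioo (fun x hx => ?_)
    obtain ⟨hx0, hx1⟩ := hx
    have hfx : f x = φ α β x / B := by rw [hf x, if_pos ⟨hx0, hx1⟩]; rfl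
    have hφpos : 0 < φ α β x :=
      mul_pos (Real.rpow_pos_of_pos hx0 _) (Real.rpow_pos_of_pos (by linarith) _)
    have habs : |x| = x := abs_of_pos hx0
    have hlogφ : Real.log (φ α β x) = (α - 1) * Real.log x + (β - 1) * Real.log (1 - x) := by
      rw [φ, Real.log_mul (Real.rpow_pos_of_pos hx0 _).ne' (Real.rpow_pos_of_pos (by linarith) _).ne',
        Real.log_rpow hx0, Real.log_rpow (by linarith)]
    have harg : Real.log (|x| * f x)
        = α * Real.log x + (β - 1) * Real.log (1 - x) - Real.log B := by
      rw [habs, hfx, Real.log_mul hx0.ne' (div_pos hφpos hBpos).ne',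
        Real.log_div hφpos.ne' hBpos.ne', hlogφ]
      ring
    rw [Real.logb, harg, hfx]
    field_simp
    ring
  rw [hcongr]
  have hI1 : IntegrableOn (fun x => (α / (B * Real.log 2)) * (φ α β x * Real.log x)) (Ioo 0 1) :=
    (betaLog_integrableOn hα hβ).const_mul _
  have hI2 : IntegrableOn
      (fun x => ((β - 1) / (B * Real.log 2)) * (φ α β x * Real.log (1 - x))) (Ioo 0 1) :=
    (betaLog1_integrableOn hα hβ).const_mul _
  have hI3 : IntegrableOn (fun x => (-(Real.log B) / (B * Real.log 2)) * φ α β x) (Ioo 0 1) :=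
    (betaInt_integrableOn hα hβ).const_mul _
  have hI12 : IntegrableOn (fun x => (α / (B * Real.log 2)) * (φ α β x * Real.log x)
      + ((β - 1) / (B * Real.log 2)) * (φ α β x * Real.log (1 - x))) (Ioo 0 1) := hI1.add hI2
  rw [integral_add hI12 hI3, integral_add hI1 hI2,
    integral_const_mul, integral_const_mul, integral_const_mul,
    betaLog_eq hα hβ, betaLog1_eq hα hβ, betaInt_setIntegral hα hβ, ← hB]
  rw [Real.logb]
  field_simp
  ring
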